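/- Let Φ be a feature map whose distribution under p_x is a zero-mean mixture of Gaussians with total variance (diversity) ν = Σ_i α_i (tr(Σ_i) + ‖μ_i‖₂²), and let the classifier over C classes be the softmax with weights w = (w_1,...,w_C). Then ‖w‖₂ ≥ (log(C) − E_{x~p_x}[H[p(·|x; w)]]) / (2√ν), where ‖w‖₂ = √(Σ_i ‖w_i‖₂²) and H is the Shannon entropy of the softmax output. -/

import Mathlib

open MeasureTheory
open scoped RealInnerProductSpace

/-- Shannon entropy of the softmax distribution with weights `w` on feature `φ`. -/
noncomputable def softmaxEntropy {n C : ℕ} (w : Fin C → EuclideanSpace ℝ (Fin n))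
    (φ : EuclideanSpace ℝ (Fin n)) : ℝ :=
  -∑ i, (Real.exp ⟪w i, φ⟫ / ∑ j, Real.exp ⟪w j, φ⟫) *
      Real.log (Real.exp ⟪w i, φ⟫ / ∑ j, Real.exp ⟪w j, φ⟫)

lemma softmaxEntropy_eq {n C : ℕ} (w : Fin C → EuclideanSpace ℝ (Fin n))
    (φ : EuclideanSpace ℝ (Fin n)) (hC : 0 < C) :
    softmaxEntropy w φ =
      Real.log (∑ j, Real.exp ⟪w j, φ⟫) -
        ∑ i, (Real.exp ⟪w i, φ⟫ / ∑ j, Real.exp ⟪w j, φ⟫) * ⟪w i, φ⟫ := by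
  have : Nonempty (Fin C) := ⟨⟨0, hC⟩⟩
  set S := ∑ j, Real.exp ⟪w j, φ⟫ with hS
  have hSpos : 0 < S := Finset.sum_pos (fun j _ => Real.exp_pos _) Finset.univ_nonempty
  have hsum : ∑ i, Real.exp ⟪w i, φ⟫ / S = 1 := by
    rw [← Finset.sum_div, ← hS, div_self hSpos.ne']
  unfold softmaxEntropy
  rw [← hS]
  have hlog : ∀ i : Fin C, Real.log (Real.exp ⟪w i, φ⟫ / S) = ⟪w i, φ⟫ - Real.log S := by
    intro i
    rw [Real.log_div (Real.exp_ne_zero _) hSpos.ne', Real.log_exp]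
  calc -∑ i, (Real.exp ⟪w i, φ⟫ / S) * Real.log (Real.exp ⟪w i, φ⟫ / S)
      = -∑ i, (Real.exp ⟪w i, φ⟫ / S) * (⟪w i, φ⟫ - Real.log S) := by
        congr 1; exact Finset.sum_congr rfl fun i _ => by rw [hlog i]
    _ = (∑ i, (Real.exp ⟪w i, φ⟫ / S)) * Real.log S
          - ∑ i, (Real.exp ⟪w i, φ⟫ / S) * ⟪w i, φ⟫ := by
        rw [Finset.sum_mul, ← Finset.sum_sub_distrib]
        rw [← Finset.sum_neg_distrib]
        exact Finset.sum_congr rfl fun i _ => by ring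
    _ = Real.log S - ∑ i, (Real.exp ⟪w i, φ⟫ / S) * ⟪w i, φ⟫ := by rw [hsum, one_mul]

lemma softmaxEntropy_bounds {n C : ℕ} (w : Fin C → EuclideanSpace ℝ (Fin n))
    (φ : EuclideanSpace ℝ (Fin n)) (hC : 0 < C) :
    Real.log C - 2 * Real.sqrt (∑ i, ‖w i‖ ^ 2) * ‖φ‖ ≤ softmaxEntropy w φ ∧
      |softmaxEntropy w φ| ≤ Real.log C + 2 * Real.sqrt (∑ i, ‖w i‖ ^ 2) * ‖φ‖ := by
  have : Nonempty (Fin C) := ⟨⟨0, hC⟩⟩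
  set W := Real.sqrt (∑ i, ‖w i‖ ^ 2) with hW
  have hWnn : 0 ≤ W := Real.sqrt_nonneg _
  set S := ∑ j, Real.exp ⟪w j, φ⟫ with hS
  have hSpos : 0 < S := Finset.sum_pos (fun j _ => Real.exp_pos _) Finset.univ_nonempty
  have ha : ∀ i : Fin C, |⟪w i, φ⟫| ≤ W * ‖φ‖ := by
    intro i
    have h1 : |⟪w i, φ⟫| ≤ ‖w i‖ * ‖φ‖ := abs_real_inner_le_norm _ _
    have h2 : ‖w i‖ ≤ W := by
      rw [hW, Real.le_sqrt (norm_nonneg _) (Finset.sum_nonneg fun i _ => sq_nonneg _)]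
      exact Finset.single_le_sum (fun i _ => sq_nonneg ‖w i‖) (Finset.mem_univ i)
    calc |⟪w i, φ⟫| ≤ ‖w i‖ * ‖φ‖ := h1
      _ ≤ W * ‖φ‖ := by gcongr
  -- bounds on log S
  have hlogS_lb : Real.log C - W * ‖φ‖ ≤ Real.log S := by
    have hle : (C : ℝ) * Real.exp (-(W * ‖φ‖)) ≤ S := by
      have : ∀ i : Fin C, Real.exp (-(W * ‖φ‖)) ≤ Real.exp ⟪w i, φ⟫ := fun i =>
        Real.exp_le_exp.mpr (by have := (abs_le.mp (ha i)).1; linarith)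
      calc (C : ℝ) * Real.exp (-(W * ‖φ‖))
          = ∑ _i : Fin C, Real.exp (-(W * ‖φ‖)) := by
            rw [Finset.sum_const, Finset.card_univ, Fintype.card_fin, nsmul_eq_mul]
        _ ≤ S := Finset.sum_le_sum fun i _ => this i
    have hCpos : (0 : ℝ) < C := Nat.cast_pos.mpr hC
    have := Real.log_le_log (by positivity) hle
    rwa [Real.log_mul hCpos.ne' (Real.exp_ne_zero _), Real.log_exp, ← sub_eq_add_neg] at this
  have hlogS_ub : Real.log S ≤ Real.log C + W * ‖φ‖ := by
    have hle : S ≤ (C : ℝ) * Real.exp (W * ‖φ‖) := by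
      have : ∀ i : Fin C, Real.exp ⟪w i, φ⟫ ≤ Real.exp (W * ‖φ‖) := fun i =>
        Real.exp_le_exp.mpr (abs_le.mp (ha i)).2
      calc S ≤ ∑ _i : Fin C, Real.exp (W * ‖φ‖) := Finset.sum_le_sum fun i _ => this i
        _ = (C : ℝ) * Real.exp (W * ‖φ‖) := by
            rw [Finset.sum_const, Finset.card_univ, Fintype.card_fin, nsmul_eq_mul]
    have hCpos : (0 : ℝ) < C := Nat.cast_pos.mpr hC
    have := Real.log_le_log hSpos hle
    rwa [Real.log_mul hCpos.ne' (Real.exp_ne_zero _), Real.log_exp] at this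
  -- bound on the weighted sum
  have hsum1 : ∑ i, Real.exp ⟪w i, φ⟫ / S = 1 := by
    rw [← Finset.sum_div, ← hS, div_self hSpos.ne']
  have hp : ∀ i : Fin C, 0 ≤ Real.exp ⟪w i, φ⟫ / S := fun i => by positivity
  have hpa : |∑ i, (Real.exp ⟪w i, φ⟫ / S) * ⟪w i, φ⟫| ≤ W * ‖φ‖ := by
    calc |∑ i, (Real.exp ⟪w i, φ⟫ / S) * ⟪w i, φ⟫|
        ≤ ∑ i, |(Real.exp ⟪w i, φ⟫ / S) * ⟪w i, φ⟫| := Finset.abs_sum_le_sum_abs _ _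
      _ ≤ ∑ i, (Real.exp ⟪w i, φ⟫ / S) * (W * ‖φ‖) := by
          apply Finset.sum_le_sum
          intro i _
          rw [abs_mul, abs_of_nonneg (hp i)]
          exact mul_le_mul_of_nonneg_left (ha i) (hp i)
      _ = W * ‖φ‖ := by rw [← Finset.sum_mul, hsum1, one_mul]
  have heq := softmaxEntropy_eq w φ hC
  rw [← hS] at heq
  have hlogC : 0 ≤ Real.log C := by
    have : (1 : ℝ) ≤ C := by exact_mod_cast hC
    exact Real.log_nonneg this
  constructor
  · rw [heq]
    have := (abs_le.mp hpa).2
    linarith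
  · rw [heq]
    have h1 := (abs_le.mp hpa).1
    have h2 := (abs_le.mp hpa).2
    rw [abs_le]
    constructor <;> linarith

lemma softmaxEntropy_continuous {n C : ℕ} (w : Fin C → EuclideanSpace ℝ (Fin n)) (hC : 0 < C) :
    Continuous (softmaxEntropy w) := by
  have : Nonempty (Fin C) := ⟨⟨0, hC⟩⟩
  have hSc : Continuous fun φ : EuclideanSpace ℝ (Fin n) => ∑ j, Real.exp ⟪w j, φ⟫ :=
    continuous_finset_sum _ fun j _ =>
      Real.continuous_exp.comp (continuous_const.inner continuous_id)
  have hSpos : ∀ φ : EuclideanSpace ℝ (Fin n), 0 < ∑ j, Real.exp ⟪w j, φ⟫ := fun φ =>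
    Finset.sum_pos (fun j _ => Real.exp_pos _) Finset.univ_nonempty
  unfold softmaxEntropy
  apply Continuous.neg
  apply continuous_finset_sum
  intro i _
  have h1 : Continuous fun φ : EuclideanSpace ℝ (Fin n) =>
      Real.exp ⟪w i, φ⟫ / ∑ j, Real.exp ⟪w j, φ⟫ :=
    (Real.continuous_exp.comp (continuous_const.inner continuous_id)).div hSc
      fun φ => (hSpos φ).ne'
  exact h1.mul (h1.log fun φ => by positivity)

/-- Lower bound on the classifier norm in terms of the expected softmax entropy and the
diversity `ν = E[‖Φ(x)‖²]` of the (zero-mean Gaussian-mixture) feature distribution. -/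
theorem stmt_6 {X : Type*} [MeasurableSpace X] (P : Measure X) [IsProbabilityMeasure P]
    (n C : ℕ) (hC : 0 < C) (w : Fin C → EuclideanSpace ℝ (Fin n))
    (Φ : X → EuclideanSpace ℝ (Fin n)) (hΦ : Measurable Φ)
    (hmem : MemLp (fun x => ‖Φ x‖) 2 P)
    (ν : ℝ) (hν : 0 < ν) (hdiv : ∫ x, ‖Φ x‖ ^ 2 ∂P = ν) :
    Real.sqrt (∑ i, ‖w i‖ ^ 2) ≥
      (Real.log C - ∫ x, softmaxEntropy w (Φ x) ∂P) / (2 * Real.sqrt ν) := by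
  set W := Real.sqrt (∑ i, ‖w i‖ ^ 2) with hW
  have hWnn : 0 ≤ W := Real.sqrt_nonneg _
  -- integrability of ‖Φ‖
  have hΦint : Integrable (fun x => ‖Φ x‖) P := hmem.integrable one_le_two
  -- integrability of the entropy
  have hHmeas : AEStronglyMeasurable (fun x => softmaxEntropy w (Φ x)) P :=
    (((softmaxEntropy_continuous w hC).measurable.comp hΦ)).aestronglyMeasurable
  have hbound : Integrable (fun x => Real.log C + 2 * W * ‖Φ x‖) P :=
    (integrable_const _).add (hΦint.const_mul _)
  have hHint : Integrable (fun x => softmaxEntropy w (Φ x)) P := by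
    apply Integrable.mono' hbound hHmeas
    filter_upwards with x
    exact (softmaxEntropy_bounds w (Φ x) hC).2
  -- lower bound on the expected entropy
  have hlb : Integrable (fun x => Real.log C - 2 * W * ‖Φ x‖) P :=
    (integrable_const _).sub (hΦint.const_mul _)
  have hmono : ∫ x, (Real.log C - 2 * W * ‖Φ x‖) ∂P ≤ ∫ x, softmaxEntropy w (Φ x) ∂P :=
    integral_mono hlb hHint fun x => (softmaxEntropy_bounds w (Φ x) hC).1
  have hint_eq : ∫ x, (Real.log C - 2 * W * ‖Φ x‖) ∂P
      = Real.log C - 2 * W * ∫ x, ‖Φ x‖ ∂P := by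
    rw [integral_sub (integrable_const _) (hΦint.const_mul _), integral_const,
      integral_const_mul, probReal_univ, smul_eq_mul, one_mul]
  -- Cauchy–Schwarz / Jensen: E[‖Φ‖] ≤ √ν
  set m := ∫ x, ‖Φ x‖ ∂P with hm
  have hmnn : 0 ≤ m := integral_nonneg fun x => norm_nonneg _
  have hmsq : m ^ 2 ≤ ν := by
    have hv := ProbabilityTheory.variance_nonneg (fun x => ‖Φ x‖) P
    rw [ProbabilityTheory.variance_eq_sub hmem] at hv
    have h2 : (∫ x, (fun x => ‖Φ x‖) x ^ 2 ∂P) = ν := by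
      simpa using hdiv
    simp only [Pi.pow_apply] at hv
    rw [hdiv] at hv
    linarith [hv]
  have hmle : m ≤ Real.sqrt ν := by
    rw [Real.le_sqrt hmnn hν.le]
    exact hmsq
  -- conclude
  have hdenom : 0 < 2 * Real.sqrt ν := by positivity
  rw [ge_iff_le, div_le_iff₀ hdenom]
  have : Real.log C - ∫ x, softmaxEntropy w (Φ x) ∂P ≤ 2 * W * m := by
    rw [hint_eq] at hmono; linarith
  calc Real.log C - ∫ x, softmaxEntropy w (Φ x) ∂P ≤ 2 * W * m := this
    _ ≤ 2 * W * Real.sqrt ν := by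
        apply mul_le_mul_of_nonneg_left hmle (by positivity)
    _ = W * (2 * Real.sqrt ν) := by ring
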